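/- For any two Lagrangian planes ℓ, ℓ' in ℝ^{2n} corresponding under the Souriau map to symmetric unitary matrices w, w' respectively, the rank of w - w' equals n minus the dimension of ℓ ∩ ℓ'. -/

import Mathlib

open Matrix Complex

noncomputable section

/-- Phase space ℝ^{2n} = ℝ^n_x × ℝ^n_p. -/
abbrev V (n : ℕ) := (Fin n → ℝ) × (Fin n → ℝ)

/-- Standard symplectic form σ(z,z') = p·x' - p'·x. -/
def Omega (n : ℕ) (z w : V n) : ℝ := z.2 ⬝ᵥ w.1 - w.2 ⬝ᵥ z.1

/-- Lagrangian plane: n-dimensional subspace on which σ vanishes. -/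
def IsLagrangian (n : ℕ) (L : Submodule ℝ (V n)) : Prop :=
  Module.finrank ℝ L = n ∧ ∀ z ∈ L, ∀ w ∈ L, Omega n z w = 0

/-- Symplectic linear map. -/
def IsSymplectic (n : ℕ) (S : V n →ₗ[ℝ] V n) : Prop :=
  Function.Bijective S ∧ ∀ z w, Omega n (S z) (S w) = Omega n z w

/-- Dimension of a maximal subspace on which Q is positive. -/
def posIndex {E : Type*} [AddCommGroup E] [Module ℝ E] (Q : E → ℝ) : ℕ :=
  sSup {k | ∃ W : Submodule ℝ E, Module.finrank ℝ W = k ∧ ∀ v ∈ W, v ≠ 0 → 0 < Q v}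

def negIndex {E : Type*} [AddCommGroup E] [Module ℝ E] (Q : E → ℝ) : ℕ :=
  posIndex fun v => -Q v

/-- σ(z,z') + σ(z',z'') + σ(z'',z) on ℓ × ℓ' × ℓ''. -/
def tripleForm (n : ℕ) (L L' L'' : Submodule ℝ (V n)) : (L × L' × L'') → ℝ :=
  fun t => Omega n t.1 t.2.1 + Omega n t.2.1 t.2.2 + Omega n t.2.2 t.1

/-- Kashiwara signature τ(ℓ,ℓ',ℓ''). -/
def tau (n : ℕ) (L L' L'' : Submodule ℝ (V n)) : ℤ :=
  (posIndex (tripleForm n L L' L'') : ℤ) - negIndex (tripleForm n L L' L'')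

/-- ∂dim(ℓ,ℓ',ℓ''). -/
def ddim (n : ℕ) (L L' L'' : Submodule ℝ (V n)) : ℤ :=
  (Module.finrank ℝ ↥(L ⊓ L') : ℤ) - Module.finrank ℝ ↥(L ⊓ L'')
    + Module.finrank ℝ ↥(L' ⊓ L'')

/-- Index of inertia. -/
def Inert (n : ℕ) (L L' L'' : Submodule ℝ (V n)) : ℤ :=
  (tau n L L' L'' - ddim n L L' L'' + n) / 2

/-- Real and imaginary parts of a complex matrix. -/
def reM (n : ℕ) (u : Matrix (Fin n) (Fin n) ℂ) : Matrix (Fin n) (Fin n) ℝ :=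
  of fun i j => (u i j).re

def imM (n : ℕ) (u : Matrix (Fin n) (Fin n) ℂ) : Matrix (Fin n) (Fin n) ℝ :=
  of fun i j => (u i j).im

/-- The identification A+iB ↦ [[A,-B],[B,A]] acting on ℝ^{2n}. -/
def uReal (n : ℕ) (u : Matrix (Fin n) (Fin n) ℂ) : V n →ₗ[ℝ] V n where
  toFun z := (reM n u *ᵥ z.1 - imM n u *ᵥ z.2, imM n u *ᵥ z.1 + reM n u *ᵥ z.2)
  map_add' a b := by
    ext i <;> (simp [Matrix.mulVec_add]; try ring)
  map_smul' c a := by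
    ext i <;> (simp [Matrix.mulVec_smul]; try ring)

/-- The momentum plane ℓ_p = 0 × ℝ^n. -/
def ellP (n : ℕ) : Submodule ℝ (V n) := Submodule.prod ⊥ ⊤


def iota (n : ℕ) : V n →ₗ[ℝ] (Fin n → ℂ) where
  toFun z := fun j => (z.1 j : ℂ) + (z.2 j : ℂ) * I
  map_add' a b := by ext j; simp; push_cast; ring
  map_smul' c a := by ext j; simp; push_cast; ring

lemma iota_injective (n : ℕ) : Function.Injective (iota n) := by
  intro z z' h
  have h' : ∀ j, (z.1 j : ℂ) + (z.2 j : ℂ) * I = (z'.1 j : ℂ) + (z'.2 j : ℂ) * I :=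
    fun j => congrFun h j
  have : ∀ j, z.1 j = z'.1 j ∧ z.2 j = z'.2 j := by
    intro j
    have := h' j
    rw [Complex.ext_iff] at this
    simpa using this
  ext j
  · exact (this j).1
  · exact (this j).2

lemma iota_uReal (n : ℕ) (u : Matrix (Fin n) (Fin n) ℂ) (z : V n) :
    iota n (uReal n u z) = u *ᵥ iota n z := by
  ext j
  rw [Complex.ext_iff]
  constructor <;>
  · simp [iota, uReal, reM, imM, Matrix.mulVec, dotProduct, Complex.re_sum, Complex.im_sum,
      Finset.sum_sub_distrib, ← Finset.sum_add_distrib, mul_comm]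
    try (apply Finset.sum_congr rfl; intros; ring)

lemma star_mulVec' (n : ℕ) (A : Matrix (Fin n) (Fin n) ℂ) (v : Fin n → ℂ) :
    star (A *ᵥ v) = A.map (starRingEnd ℂ) *ᵥ star v := by
  ext j
  simp [Matrix.mulVec, dotProduct, Matrix.map_apply, star_sum, mul_comm]

lemma cj_transpose_eq_conjTranspose (n : ℕ) (u : Matrix (Fin n) (Fin n) ℂ) :
    (u.map (starRingEnd ℂ))ᵀ = uᴴ := rfl

lemma transpose_mul_cj (n : ℕ) (u : Matrix (Fin n) (Fin n) ℂ)
    (hu : u ∈ Matrix.unitaryGroup (Fin n) ℂ) :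
    uᵀ * u.map (starRingEnd ℂ) = 1 := by
  have h1 : uᴴ * u = 1 := hu.1
  have := congrArg Matrix.transpose h1
  rw [Matrix.transpose_mul] at this
  exact (by simpa [Matrix.transpose_one] using this : uᵀ * uᴴᵀ = 1)

lemma cj_mul_transpose (n : ℕ) (u : Matrix (Fin n) (Fin n) ℂ)
    (hu : u ∈ Matrix.unitaryGroup (Fin n) ℂ) :
    u.map (starRingEnd ℂ) * uᵀ = 1 := by
  have h1 : u * uᴴ = 1 := hu.2
  have := congrArg Matrix.transpose h1
  rw [Matrix.transpose_mul] at this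
  exact (by simpa [Matrix.transpose_one] using this : uᴴᵀ * uᵀ = 1)

lemma cj_conjTranspose (n : ℕ) (u : Matrix (Fin n) (Fin n) ℂ) :
    uᴴ.map (starRingEnd ℂ) = uᵀ := by
  apply Matrix.ext
  intro i j
  simp [Matrix.conjTranspose_apply, Matrix.map_apply]

lemma mem_L_iff (n : ℕ) (u : Matrix (Fin n) (Fin n) ℂ)
    (hu : u ∈ Matrix.unitaryGroup (Fin n) ℂ) (z : V n) :
    z ∈ (ellP n).map (uReal n u) ↔ (u * uᵀ) *ᵥ star (iota n z) = -(iota n z) := by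
  have hu1 : uᴴ * u = 1 := by simpa [Matrix.star_eq_conjTranspose] using hu.1
  have hu2 : u * uᴴ = 1 := by simpa [Matrix.star_eq_conjTranspose] using hu.2
  rw [Submodule.mem_map]
  constructor
  · rintro ⟨y, hy, rfl⟩
    have hy1 : y.1 = 0 := by
      have := (Submodule.mem_prod.mp hy).1
      simpa using this
    set v : Fin n → ℂ := iota n y with hv
    have hstarv : star v = -v := by
      ext j
      simp [hv, iota, hy1, Complex.ext_iff]
    rw [iota_uReal, star_mulVec', hstarv, Matrix.mulVec_neg, Matrix.mulVec_neg,
      Matrix.mulVec_mulVec, Matrix.mul_assoc, transpose_mul_cj n u hu, Matrix.mul_one]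
  · intro H
    set ζ := iota n z with hζ
    set v : Fin n → ℂ := uᴴ *ᵥ ζ with hv
    have huv : u *ᵥ v = ζ := by
      rw [hv, Matrix.mulVec_mulVec, hu2, Matrix.one_mulVec]
    have hstarv : star v = -v := by
      have h2 : star v = uᵀ *ᵥ star ζ := by
        rw [hv, star_mulVec', cj_conjTranspose]
      have h3 : u *ᵥ (uᵀ *ᵥ star ζ) = -ζ := by
        rw [Matrix.mulVec_mulVec]; exact H
      have h4 : uᴴ *ᵥ (u *ᵥ (uᵀ *ᵥ star ζ)) = uᴴ *ᵥ (-ζ) := by rw [h3]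
      rw [Matrix.mulVec_mulVec, Matrix.mulVec_mulVec, hu1, Matrix.one_mul,
        Matrix.mulVec_neg] at h4
      rw [h2, h4, hv]
    refine ⟨(0, fun j => (v j).im), ?_, ?_⟩
    · apply Submodule.mem_prod.mpr; simp
    · apply iota_injective
      rw [iota_uReal]
      have hveq : iota n (0, fun j => (v j).im) = v := by
        ext j
        have h1 : (starRingEnd ℂ) (v j) = -(v j) := congrFun hstarv j
        have hre : (v j).re = 0 := by
          have := congrArg Complex.re h1
          simp at this
          linarith
        simp [iota, Complex.ext_iff, hre]
      rw [hveq, huv]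

/-- The fixed subspace F = {v | (w-w')v = 0 ∧ wv = -star v}, an ℝ-subspace of ℂ^n. -/
def Fsub (n : ℕ) (w w' : Matrix (Fin n) (Fin n) ℂ) : Submodule ℝ (Fin n → ℂ) where
  carrier := {v | (w - w') *ᵥ v = 0 ∧ w *ᵥ v = -star v}
  add_mem' := by
    rintro a b ⟨ha1, ha2⟩ ⟨hb1, hb2⟩
    constructor
    · rw [Matrix.mulVec_add, ha1, hb1, add_zero]
    · rw [Matrix.mulVec_add, ha2, hb2, star_add]; abel
  zero_mem' := by
    constructor <;> simp
  smul_mem' := by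
    rintro c v ⟨h1, h2⟩
    have hc : c • v = (c : ℂ) • v := by
      ext j; simp [Complex.real_smul]
    constructor
    · rw [hc, Matrix.mulVec_smul, h1, smul_zero]
    · rw [hc, Matrix.mulVec_smul, h2, star_smul]
      simp

/-- Multiplication by I as an ℝ-linear map. -/
def muI (n : ℕ) : (Fin n → ℂ) →ₗ[ℝ] (Fin n → ℂ) where
  toFun v := (I : ℂ) • v
  map_add' a b := smul_add _ _ _
  map_smul' c v := by
    show (I : ℂ) • (c • v) = c • ((I : ℂ) • v)
    exact smul_comm _ _ _

lemma muI_injective (n : ℕ) : Function.Injective (muI n) := by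
  intro a b h
  have : (I : ℂ) • a = (I : ℂ) • b := h
  have h2 := congrArg (fun x => (-I : ℂ) • x) this
  simpa [smul_smul] using h2

lemma smul_eq_zero_vec {n : ℕ} (c : ℂ) (hc : c ≠ 0) (v : Fin n → ℂ) (h : c • v = 0) : v = 0 := by
  simpa [hc] using (smul_eq_zero.mp h)

lemma key_finrank (n : ℕ) (w w' : Matrix (Fin n) (Fin n) ℂ)
    (hw : w * w.map (starRingEnd ℂ) = 1) (hw' : w' * w'.map (starRingEnd ℂ) = 1) :
    Module.finrank ℝ ↥(Fsub n w w') =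
      Module.finrank ℂ ↥(LinearMap.ker (w - w').mulVecLin) := by
  set K := LinearMap.ker (w - w').mulVecLin with hK
  set F := Fsub n w w' with hF
  set G := F.map (muI n) with hG
  -- star(w *ᵥ v) facts for v ∈ ker
  have star_mulVec' : ∀ (A : Matrix (Fin n) (Fin n) ℂ) (v : Fin n → ℂ),
      star (A *ᵥ v) = A.map (starRingEnd ℂ) *ᵥ star v := by
    intro A v
    ext j
    simp [Matrix.mulVec, dotProduct, Matrix.map_apply, star_sum, mul_comm]
  have hker : ∀ v, v ∈ K ↔ (w - w') *ᵥ v = 0 := by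
    intro v
    rw [hK, LinearMap.mem_ker, Matrix.mulVecLin_apply]
  have hwsv : ∀ v : Fin n → ℂ, w *ᵥ star (w *ᵥ v) = star v := by
    intro v
    rw [star_mulVec', Matrix.mulVec_mulVec, hw, Matrix.one_mulVec]
  have hkerS : ∀ v : Fin n → ℂ, (w - w') *ᵥ v = 0 → (w - w') *ᵥ star (w *ᵥ v) = 0 := by
    intro v hv
    have heq : w *ᵥ v = w' *ᵥ v := by
      have := Matrix.sub_mulVec w w' v
      rw [hv] at this
      linear_combination (norm := module) -this
    rw [Matrix.sub_mulVec, hwsv, heq, star_mulVec', Matrix.mulVec_mulVec, hw',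
      Matrix.one_mulVec, sub_self]
  -- F ≤ K, G ≤ K (as sets)
  have hFK : F ≤ K.restrictScalars ℝ := by
    rintro v ⟨h1, _⟩
    exact (hker v).mpr h1
  have hGK : G ≤ K.restrictScalars ℝ := by
    rintro v ⟨x, ⟨hx1, _⟩, rfl⟩
    apply (hker _).mpr
    show (w - w') *ᵥ ((I:ℂ) • x) = 0
    rw [Matrix.mulVec_smul, hx1, smul_zero]
  -- F ⊓ G = ⊥
  have hdisj : F ⊓ G = ⊥ := by
    rw [eq_bot_iff]
    rintro v ⟨⟨h1, h2⟩, x, ⟨hx1, hx2⟩, rfl⟩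
    show (I:ℂ) • x = 0
    have h2' : w *ᵥ ((I:ℂ) • x) = -star ((I:ℂ) • x) := h2
    have hiv : w *ᵥ ((I:ℂ) • x) = -((I:ℂ) • star x) := by
      rw [Matrix.mulVec_smul, hx2, smul_neg]
    have hsv : -star ((I:ℂ) • x) = (I:ℂ) • star x := by
      rw [star_smul]; simp
    have h3 : -((I:ℂ) • star x) = (I:ℂ) • star x := by
      rw [← hiv, h2', hsv]
    have h4 : ((2:ℂ) * I) • star x = 0 := by
      have := congrArg (fun y => y + (I:ℂ) • star x) h3
      simpa [two_mul, add_smul] using this.symm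
    have h5 : star x = 0 := smul_eq_zero_vec _ (by simp [Complex.ext_iff]) _ h4
    have : x = 0 := by
      have := congrArg star h5
      simpa using this
    rw [this, smul_zero]
  -- K ≤ F ⊔ G
  have hsup : K.restrictScalars ℝ ≤ F ⊔ G := by
    intro v hv
    have hv0 : (w - w') *ᵥ v = 0 := (hker v).mp hv
    set s := star (w *ᵥ v) with hs
    have hss : star s = w *ᵥ v := by rw [hs, star_star]
    set a : Fin n → ℂ := (2⁻¹ : ℂ) • (v - s) with ha
    set b : Fin n → ℂ := (2⁻¹ : ℂ) • (v + s) with hb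
    have hvab : v = a + b := by
      rw [ha, hb, ← smul_add]
      match_scalars <;> ring
    have haF : a ∈ F := by
      constructor
      · show (w - w') *ᵥ a = 0
        rw [ha, Matrix.mulVec_smul, Matrix.mulVec_sub, hv0, hs, hkerS v hv0, sub_zero, smul_zero]
      · show w *ᵥ a = -star a
        rw [ha, Matrix.mulVec_smul, Matrix.mulVec_sub, hs, hwsv, star_smul, star_sub, hss]
        simp [smul_sub, neg_sub]
    have hbG : b ∈ G := by
      refine ⟨(-I : ℂ) • b, ?_, ?_⟩
      · constructor
        · show (w - w') *ᵥ ((-I:ℂ) • b) = 0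
          rw [Matrix.mulVec_smul, hb, Matrix.mulVec_smul, Matrix.mulVec_add, hv0, hs,
            hkerS v hv0, add_zero]
          simp
        · show w *ᵥ ((-I:ℂ) • b) = -star ((-I:ℂ) • b)
          rw [Matrix.mulVec_smul, hb, Matrix.mulVec_smul, Matrix.mulVec_add, hs, hwsv,
            star_smul, star_smul, star_add, hss]
          have : (starRingEnd ℂ) (-I) = I := by simp
          rw [show (star (-I : ℂ)) = I by simp, show (star (2⁻¹ : ℂ)) = 2⁻¹ by
            simp [Complex.ext_iff]]
          match_scalars <;> ring
      · show (muI n) ((-I:ℂ) • b) = b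
        show (I : ℂ) • ((-I:ℂ) • b) = b
        rw [smul_smul]
        norm_num
    rw [hvab]
    exact Submodule.add_mem _ (Submodule.mem_sup_left haF) (Submodule.mem_sup_right hbG)
  have hFG : F ⊔ G = K.restrictScalars ℝ := le_antisymm (sup_le hFK hGK) hsup
  -- finrank G = finrank F
  have hfrG : Module.finrank ℝ ↥G = Module.finrank ℝ ↥F :=
    (LinearEquiv.finrank_eq (Submodule.equivMapOfInjective (muI n) (muI_injective n) F)).symm
  -- finrank Kr = 2 * finrank K
  have hfrK : Module.finrank ℝ ↥(K.restrictScalars ℝ) = 2 * Module.finrank ℂ ↥K := by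
    have e := (Submodule.restrictScalarsEquiv ℝ ℂ _ K).restrictScalars ℝ
    rw [e.finrank_eq, ← Module.finrank_mul_finrank ℝ ℂ ↥K, Complex.finrank_real_complex]
  have hadd := Submodule.finrank_sup_add_finrank_inf_eq F G
  rw [hFG, hdisj, hfrG, hfrK] at hadd
  simp at hadd
  omega


/-- star as an ℝ-linear map on ℂ^n. -/
def mystar (n : ℕ) : (Fin n → ℂ) →ₗ[ℝ] (Fin n → ℂ) where
  toFun := star
  map_add' a b := star_add a b
  map_smul' c v := by
    ext j
    simp [Complex.ext_iff]

lemma w_mul_cj (n : ℕ) (u : Matrix (Fin n) (Fin n) ℂ)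
    (hu : u ∈ Matrix.unitaryGroup (Fin n) ℂ) :
    (u * uᵀ) * (u * uᵀ).map (starRingEnd ℂ) = 1 := by
  have hu2 : u * uᴴ = 1 := by simpa [Matrix.star_eq_conjTranspose] using hu.2
  have h1 : (u * uᵀ).map (starRingEnd ℂ) = u.map (starRingEnd ℂ) * uᵀ.map (starRingEnd ℂ) := by
    simp [Matrix.map_mul]
  have h2 : uᵀ.map (starRingEnd ℂ) = uᴴ := rfl
  rw [h1, h2, show u * uᵀ * (u.map (starRingEnd ℂ) * uᴴ)
      = u * (uᵀ * u.map (starRingEnd ℂ)) * uᴴ by noncomm_ring,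
    transpose_mul_cj n u hu, Matrix.mul_one, hu2]

lemma inter_equiv_Fsub (n : ℕ) (u u' : Matrix (Fin n) (Fin n) ℂ)
    (hu : u ∈ Matrix.unitaryGroup (Fin n) ℂ) (hu' : u' ∈ Matrix.unitaryGroup (Fin n) ℂ) :
    Module.finrank ℝ ↥((ellP n).map (uReal n u) ⊓ (ellP n).map (uReal n u'))
      = Module.finrank ℝ ↥(Fsub n (u * uᵀ) (u' * u'ᵀ)) := by
  set L := (ellP n).map (uReal n u) with hLdef
  set L' := (ellP n).map (uReal n u') with hL'def
  set w := u * uᵀ with hwdef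
  set w' := u' * u'ᵀ with hw'def
  have hmem : ∀ z : V n, z ∈ L ⊓ L' → star (iota n z) ∈ Fsub n w w' := by
    intro z hz
    have hz1 := (mem_L_iff n u hu z).mp hz.1
    have hz2 := (mem_L_iff n u' hu' z).mp hz.2
    constructor
    · show (w - w') *ᵥ star (iota n z) = 0
      rw [Matrix.sub_mulVec, hz1, hz2, sub_self]
    · show w *ᵥ star (iota n z) = -star (star (iota n z))
      rw [hz1, star_star]
  let T : ↥(L ⊓ L') →ₗ[ℝ] ↥(Fsub n w w') :=
    ((mystar n ∘ₗ iota n) ∘ₗ (L ⊓ L').subtype).codRestrict (Fsub n w w')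
      (fun z => hmem z.1 z.2)
  have hTapp : ∀ z : ↥(L ⊓ L'), (T z : Fin n → ℂ) = star (iota n z.1) := fun z => rfl
  have hinj : Function.Injective T := by
    intro z1 z2 h
    have h2 : star (iota n z1.1) = star (iota n z2.1) := by
      rw [← hTapp, ← hTapp, h]
    have h3 : iota n z1.1 = iota n z2.1 := by
      have := congrArg star h2
      simpa using this
    exact Subtype.ext (iota_injective n h3)
  have hsurj : Function.Surjective T := by
    rintro ⟨v, hv1, hv2⟩
    replace hv1 : (w - w') *ᵥ v = 0 := hv1
    replace hv2 : w *ᵥ v = -star v := hv2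
    set z : V n := (fun j => ((star v) j).re, fun j => ((star v) j).im) with hzdef
    have hiz : iota n z = star v := by
      ext j
      show (((star v) j).re : ℂ) + (((star v) j).im : ℂ) * I = (star v) j
      exact Complex.re_add_im _
    have hsiz : star (iota n z) = v := by rw [hiz, star_star]
    have hw'v : w' *ᵥ v = w *ᵥ v := by
      have h := Matrix.sub_mulVec w w' v
      rw [hv1] at h
      exact (sub_eq_zero.mp h.symm).symm
    have hzL : z ∈ L := by
      rw [hLdef, mem_L_iff n u hu, hsiz, hv2, hiz]
    have hzL' : z ∈ L' := by
      rw [hL'def, mem_L_iff n u' hu', hsiz, hw'v, hv2, hiz]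
    refine ⟨⟨z, hzL, hzL'⟩, ?_⟩
    apply Subtype.ext
    rw [hTapp]
    exact hsiz
  exact LinearEquiv.finrank_eq (LinearEquiv.ofBijective T ⟨hinj, hsurj⟩)

/-- Under the Souriau map ℓ = u·ℓ_p ↦ w = u·uᵀ,
rank (w - w') = n - dim (ℓ ∩ ℓ'). -/
theorem souriau_rank (n : ℕ) (u u' : Matrix (Fin n) (Fin n) ℂ)
    (hu : u ∈ Matrix.unitaryGroup (Fin n) ℂ) (hu' : u' ∈ Matrix.unitaryGroup (Fin n) ℂ)
    (L L' : Submodule ℝ (V n))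
    (hL : L = (ellP n).map (uReal n u)) (hL' : L' = (ellP n).map (uReal n u'))
    (hLag : IsLagrangian n L) (hLag' : IsLagrangian n L') :
    (u * uᵀ - u' * u'ᵀ).rank = n - Module.finrank ℝ ↥(L ⊓ L') := by
  subst hL hL'
  have hdim : Module.finrank ℝ ↥((ellP n).map (uReal n u) ⊓ (ellP n).map (uReal n u'))
      = Module.finrank ℂ ↥(LinearMap.ker (u * uᵀ - u' * u'ᵀ).mulVecLin) := by
    rw [inter_equiv_Fsub n u u' hu hu']
    exact key_finrank n (u * uᵀ) (u' * u'ᵀ) (w_mul_cj n u hu) (w_mul_cj n u' hu')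
  have hrn : (u * uᵀ - u' * u'ᵀ).rank
      + Module.finrank ℂ ↥(LinearMap.ker (u * uᵀ - u' * u'ᵀ).mulVecLin) = n := by
    have h := LinearMap.finrank_range_add_finrank_ker (u * uᵀ - u' * u'ᵀ).mulVecLin
    rw [Module.finrank_fin_fun] at h
    exact h
  omega
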